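/- (Separation lemma used in the lower bound for the Hausdorff dimension.) Let T, u ∈ [0,1] with T ≺ u, and let v ∈ (u, 1] be such that inf_{[u,v]} f < f(T−). Then for every s ∈ [0,1] with s < T or s > v, one has d(s,u) ≥ min(x_T^u, Δ_T − x_T^u). -/

import Mathlib

open Set Filter

/-- The infimum `I_s^t` of `f` over the interval `[s, t]`. -/
noncomputable def infIcc (f : ℝ → ℝ) (s t : ℝ) : ℝ := sInf (f '' Set.Icc s t)

/-- The genealogical relation `s ≼ t` associated with the excursion-type function `f`,
where `fl` is the left-limit function of `f` (with the convention `fl 0 = 0`):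
`s ≼ t ↔ s ≤ t ∧ f(s-) ≤ I_s^t`. -/
def Prec (f fl : ℝ → ℝ) (s t : ℝ) : Prop := s ≤ t ∧ fl s ≤ infIcc f s t

/-- The jump `Δ_t = f(t) - f(t-)` of `f` at `t` (with the convention `fl 0 = 0`
this gives `Δ_0 = 0` for `f 0 = 0`). -/
def jump (f fl : ℝ → ℝ) (t : ℝ) : ℝ := f t - fl t

/-- The position `x_s^t = I_s^t - f(s-)` of the ancestral line of `t` in the loop at `s`. -/
noncomputable def xpos (f fl : ℝ → ℝ) (s t : ℝ) : ℝ := infIcc f s t - fl s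

/-- Distance on the cycle of length `D`: `δ_D(a,b) = min (|a-b|, D - |a-b|)`. -/
def cycleDist (D a b : ℝ) : ℝ := min |a - b| (D - |a - b|)

/-- `d₀(s,t) = ∑_{s ≺ r ≼ t} δ_{Δ_r}(0, x_r^t)`. -/
noncomputable def dZero (f fl : ℝ → ℝ) (s t : ℝ) : ℝ :=
  ∑' r : {r : ℝ // Prec f fl s r ∧ s ≠ r ∧ Prec f fl r t},
    cycleDist (jump f fl r.1) 0 (xpos f fl r.1 t)

/-- The most recent common ancestor `s ∧ t` of `s` and `t`: the greatest common
`≼`-lower bound of `s` and `t` in `[0,1]`, realized as the supremum of the set of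
common lower bounds. -/
noncomputable def mca (f fl : ℝ → ℝ) (s t : ℝ) : ℝ :=
  sSup {r : ℝ | r ∈ Set.Icc (0:ℝ) 1 ∧ Prec f fl r s ∧ Prec f fl r t}

/-- The looptree pseudo-distance
`d(s,t) = δ_{Δ_{s∧t}}(x_{s∧t}^s, x_{s∧t}^t) + d₀(s∧t, s) + d₀(s∧t, t)`. -/
noncomputable def looptreeDist (f fl : ℝ → ℝ) (s t : ℝ) : ℝ :=
  cycleDist (jump f fl (mca f fl s t)) (xpos f fl (mca f fl s t) s) (xpos f fl (mca f fl s t) t)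
    + dZero f fl (mca f fl s t) s + dZero f fl (mca f fl s t) t

namespace LoopAux

open Topology

variable {f fl : ℝ → ℝ}

lemma bddBelow_image (hf_nonneg : ∀ t ∈ Set.Icc (0:ℝ) 1, 0 ≤ f t)
    {a b : ℝ} (h0 : 0 ≤ a) (h1 : b ≤ 1) : BddBelow (f '' Set.Icc a b) := by
  refine ⟨0, ?_⟩
  rintro y ⟨x, hx, rfl⟩
  exact hf_nonneg x ⟨h0.trans hx.1, hx.2.trans h1⟩

lemma infIcc_le_apply (hf_nonneg : ∀ t ∈ Set.Icc (0:ℝ) 1, 0 ≤ f t)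
    {a b w : ℝ} (h0 : 0 ≤ a) (h1 : b ≤ 1) (hw : w ∈ Set.Icc a b) :
    infIcc f a b ≤ f w :=
  csInf_le (bddBelow_image hf_nonneg h0 h1) ⟨w, hw, rfl⟩

lemma le_infIcc {a b c : ℝ} (hab : a ≤ b) (h : ∀ w ∈ Set.Icc a b, c ≤ f w) :
    c ≤ infIcc f a b := by
  refine le_csInf (((Set.nonempty_Icc).2 hab).image f) ?_
  rintro y ⟨x, hx, rfl⟩
  exact h x hx

lemma infIcc_mono (hf_nonneg : ∀ t ∈ Set.Icc (0:ℝ) 1, 0 ≤ f t)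
    {a b a' b' : ℝ} (h0 : 0 ≤ a) (h1 : b ≤ 1)
    (hsub : Set.Icc a' b' ⊆ Set.Icc a b) (hne : a' ≤ b') :
    infIcc f a b ≤ infIcc f a' b' :=
  csInf_le_csInf (bddBelow_image hf_nonneg h0 h1)
    (((Set.nonempty_Icc).2 hne).image f) (Set.image_mono hsub)

lemma infIcc_nonneg (hf_nonneg : ∀ t ∈ Set.Icc (0:ℝ) 1, 0 ≤ f t)
    {a b : ℝ} (h0 : 0 ≤ a) (h1 : b ≤ 1) (hab : a ≤ b) : 0 ≤ infIcc f a b :=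
  le_infIcc hab fun w hw => hf_nonneg w ⟨h0.trans hw.1, hw.2.trans h1⟩

lemma fl_nonneg (hf_left : ∀ t ∈ Set.Ioc (0:ℝ) 1, Tendsto f (𝓝[<] t) (𝓝 (fl t)))
    (hf_nonneg : ∀ t ∈ Set.Icc (0:ℝ) 1, 0 ≤ f t)
    {r : ℝ} (h0 : 0 < r) (h1 : r ≤ 1) : 0 ≤ fl r := by
  refine ge_of_tendsto (hf_left r ⟨h0, h1⟩) ?_
  filter_upwards [Ioo_mem_nhdsLT_of_mem (⟨h0, le_rfl⟩ : r ∈ Set.Ioc 0 r)] with t ht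
  exact hf_nonneg t ⟨ht.1.le, ht.2.le.trans h1⟩

/-- cross inequality: for `r < r' ≤ u`, `I_r^u ≤ fl r'`. -/
lemma infIcc_le_fl (hf_left : ∀ t ∈ Set.Ioc (0:ℝ) 1, Tendsto f (𝓝[<] t) (𝓝 (fl t)))
    (hf_nonneg : ∀ t ∈ Set.Icc (0:ℝ) 1, 0 ≤ f t)
    {r r' u : ℝ} (h0 : 0 ≤ r) (hrr' : r < r') (hr'u : r' ≤ u) (hu : u ≤ 1) :
    infIcc f r u ≤ fl r' := by
  refine ge_of_tendsto (hf_left r' ⟨h0.trans_lt hrr', hr'u.trans hu⟩) ?_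
  filter_upwards [Ioo_mem_nhdsLT_of_mem (⟨hrr', le_rfl⟩ : r' ∈ Set.Ioc r r')] with t ht
  exact infIcc_le_apply hf_nonneg h0 hu ⟨ht.1.le, (ht.2.le.trans hr'u)⟩

/-- The supremum of a set of common ancestors is itself an ancestor. -/
lemma prec_sSup (hf_left : ∀ t ∈ Set.Ioc (0:ℝ) 1, Tendsto f (𝓝[<] t) (𝓝 (fl t)))
    (hf_nonneg : ∀ t ∈ Set.Icc (0:ℝ) 1, 0 ≤ f t)
    {A : Set ℝ} (hA0 : (0:ℝ) ∈ A) (hA1 : A ⊆ Set.Icc 0 1)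
    {t : ℝ} (ht1 : t ≤ 1) (hAt : ∀ r ∈ A, Prec f fl r t) :
    Prec f fl (sSup A) t := by
  have hbdd : BddAbove A := ⟨1, fun r hr => (hA1 hr).2⟩
  have hne : A.Nonempty := ⟨0, hA0⟩
  set m := sSup A with hm
  have hmt : m ≤ t := csSup_le hne fun r hr => (hAt r hr).1
  have hm0 : 0 ≤ m := le_csSup hbdd hA0
  have hm1 : m ≤ 1 := csSup_le hne fun r hr => (hA1 hr).2
  refine ⟨hmt, ?_⟩
  by_cases hmA : m ∈ A
  · exact (hAt m hmA).2
  have hm0' : 0 < m := lt_of_le_of_ne hm0 fun h => hmA (h ▸ hA0)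
  refine le_infIcc hmt fun w hw => ?_
  by_contra hcon
  push_neg at hcon
  set ε := (fl m - f w) / 2 with hε
  have hεpos : 0 < ε := by simp only [hε]; linarith
  have hfm := hf_left m ⟨hm0', hm1⟩
  have h1 : ∀ᶠ x in 𝓝[<] m, fl m - ε < f x :=
    hfm.eventually (eventually_gt_nhds (by linarith))
  obtain ⟨c, hc, hIoo⟩ := (mem_nhdsLT_iff_exists_mem_Ico_Ioo_subset hm0').1 h1
  obtain ⟨r, hrA, hcr⟩ := exists_lt_of_lt_csSup hne (show c < sSup A from hc.2)
  have hrm : r < m := lt_of_le_of_ne (le_csSup hbdd hrA) fun h => hmA (h ▸ hrA)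
  have hr0 : 0 < r := lt_of_le_of_lt hc.1 hcr
  have hr1 : r ≤ 1 := (hA1 hrA).2
  have hrt : fl r ≤ infIcc f r t := (hAt r hrA).2
  have hrw : infIcc f r t ≤ f w :=
    infIcc_le_apply hf_nonneg hr0.le ht1 ⟨hrm.le.trans hw.1, hw.2⟩
  have hfr := hf_left r ⟨hr0, hr1⟩
  have h2 : ∀ᶠ x in 𝓝[<] r, f x < fl r + ε :=
    hfr.eventually (eventually_lt_nhds (by linarith))
  have h3 : Set.Ioo c r ∈ 𝓝[<] r := Ioo_mem_nhdsLT_of_mem ⟨hcr, le_rfl⟩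
  obtain ⟨x, hx1, hx2⟩ := (h2.and (eventually_mem_set.2 h3)).exists
  have hx3 : fl m - ε < f x := hIoo ⟨hx2.1, hx2.2.trans hrm⟩
  have : fl r ≤ f w := hrt.trans hrw
  simp only [hε] at hx1 hx3
  linarith

/-- both bounds on the summand `δ_{Δ_r}(0, x_r^t)`. -/
lemma cycleDist_bounds (hf_nonneg : ∀ t ∈ Set.Icc (0:ℝ) 1, 0 ≤ f t)
    {r t : ℝ} (h0 : 0 ≤ r) (h1 : t ≤ 1) (h : Prec f fl r t) :
    0 ≤ cycleDist (jump f fl r) 0 (xpos f fl r t) ∧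
      cycleDist (jump f fl r) 0 (xpos f fl r t) ≤ xpos f fl r t := by
  have hx : 0 ≤ xpos f fl r t := sub_nonneg.2 h.2
  have hfr : infIcc f r t ≤ f r := infIcc_le_apply hf_nonneg h0 h1 ⟨le_rfl, h.1⟩
  have habs : |(0:ℝ) - xpos f fl r t| = xpos f fl r t := by
    rw [zero_sub, abs_neg, abs_of_nonneg hx]
  unfold cycleDist
  rw [habs]
  have hx2 : xpos f fl r t ≤ jump f fl r := by
    unfold xpos jump; linarith
  exact ⟨le_min hx (by linarith), min_le_left _ _⟩

/-- finite sums of `x_r^u` over ancestors of `u` are bounded by `f u`. -/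
lemma sum_xpos_le (hf_left : ∀ t ∈ Set.Ioc (0:ℝ) 1, Tendsto f (𝓝[<] t) (𝓝 (fl t)))
    (hf_nonneg : ∀ t ∈ Set.Icc (0:ℝ) 1, 0 ≤ f t)
    {u : ℝ} (hu0 : 0 ≤ u) (hu1 : u ≤ 1)
    (F : Finset ℝ) (hF : ∀ r ∈ F, 0 < r ∧ Prec f fl r u) :
    ∑ r ∈ F, (infIcc f r u - fl r) ≤ f u := by
  have key : ∀ n : ℕ, ∀ F : Finset ℝ, F.card = n →
      (∀ r ∈ F, 0 < r ∧ Prec f fl r u) → ∀ hne : F.Nonempty,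
      ∑ r ∈ F, (infIcc f r u - fl r) ≤ f u - fl (F.min' hne) := by
    intro n
    induction n with
    | zero =>
      intro F hcard _ hne
      exact absurd (Finset.card_eq_zero.1 hcard) (Finset.nonempty_iff_ne_empty.1 hne)
    | succ n ih =>
      intro F hcard hF hne
      set m0 := F.min' hne with hm0
      have hm0F : m0 ∈ F := F.min'_mem hne
      have hm0c := hF m0 hm0F
      have hsum : ∑ r ∈ F, (infIcc f r u - fl r)
          = (infIcc f m0 u - fl m0) + ∑ r ∈ F.erase m0, (infIcc f r u - fl r) :=
        (Finset.add_sum_erase F _ hm0F).symm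
      by_cases hF' : (F.erase m0).Nonempty
      · have hcard' : (F.erase m0).card = n := by
          rw [Finset.card_erase_of_mem hm0F, hcard]; rfl
        have IH := ih (F.erase m0) hcard'
          (fun r hr => hF r (Finset.mem_of_mem_erase hr)) hF'
        set m1 := (F.erase m0).min' hF' with hm1
        have hm1F : m1 ∈ F := Finset.mem_of_mem_erase ((F.erase m0).min'_mem hF')
        have hm01 : m0 < m1 :=
          lt_of_le_of_ne (F.min'_le m1 hm1F)
            (Ne.symm (Finset.ne_of_mem_erase ((F.erase m0).min'_mem hF')))
        have hcross : infIcc f m0 u ≤ fl m1 :=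
          infIcc_le_fl hf_left hf_nonneg hm0c.1.le hm01 (hF m1 hm1F).2.1 hu1
        rw [hsum]
        linarith
      · rw [Finset.not_nonempty_iff_eq_empty.1 hF'] at hsum
        rw [hsum, Finset.sum_empty]
        have : infIcc f m0 u ≤ f u :=
          infIcc_le_apply hf_nonneg hm0c.1.le hu1 ⟨hm0c.2.1, le_rfl⟩
        linarith
  rcases F.eq_empty_or_nonempty with rfl | hne
  · simpa using hf_nonneg u ⟨hu0, hu1⟩
  · have h1 := key F.card F rfl hF hne
    have hm := hF _ (F.min'_mem hne)
    have h2 : 0 ≤ fl (F.min' hne) :=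
      fl_nonneg hf_left hf_nonneg hm.1 (hm.2.1.trans hu1)
    linarith

/-- summability of the family defining `d₀(m, u)`. -/
lemma summable_dZero (hf_left : ∀ t ∈ Set.Ioc (0:ℝ) 1, Tendsto f (𝓝[<] t) (𝓝 (fl t)))
    (hf_nonneg : ∀ t ∈ Set.Icc (0:ℝ) 1, 0 ≤ f t)
    {m u : ℝ} (hm0 : 0 ≤ m) (hu1 : u ≤ 1) (hu0 : 0 ≤ u) :
    Summable (fun r : {r : ℝ // Prec f fl m r ∧ m ≠ r ∧ Prec f fl r u} =>
      cycleDist (jump f fl r.1) 0 (xpos f fl r.1 u)) := by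
  have hpos : ∀ r : {r : ℝ // Prec f fl m r ∧ m ≠ r ∧ Prec f fl r u}, 0 < r.1 ∧ Prec f fl r.1 u :=
    fun r => ⟨lt_of_le_of_lt hm0 (lt_of_le_of_ne r.2.1.1 r.2.2.1), r.2.2.2⟩
  refine summable_of_sum_le (c := f u) (fun r => (cycleDist_bounds hf_nonneg
    (hpos r).1.le hu1 (hpos r).2).1) ?_
  intro G
  calc ∑ i ∈ G, cycleDist (jump f fl i.1) 0 (xpos f fl i.1 u)
      ≤ ∑ i ∈ G, xpos f fl i.1 u := by
        refine Finset.sum_le_sum fun i _ => (cycleDist_bounds hf_nonneg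
          (hpos i).1.le hu1 (hpos i).2).2
    _ = ∑ r ∈ G.image Subtype.val, (infIcc f r u - fl r) := by
        rw [Finset.sum_image (fun x _ y _ h => Subtype.val_injective h)]
        rfl
    _ ≤ f u := by
        refine sum_xpos_le hf_left hf_nonneg hu0 hu1 _ ?_
        intro r hr
        obtain ⟨i, _, rfl⟩ := Finset.mem_image.1 hr
        exact hpos i

end LoopAux

/-- separation lemma used in the lower bound for the Hausdorff
dimension: if T ≺ u, v ∈ (u,1] and inf_{[u,v]} f < f(T-), then for every
s ∈ [0,1] with s < T or s > v one has d(s,u) ≥ min(x_T^u, Δ_T - x_T^u). -/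
theorem looptreeDist_separation (f fl : ℝ → ℝ)
    (hf_right : ∀ t ∈ Set.Ico (0:ℝ) 1, Filter.Tendsto f (nhdsWithin t (Set.Ici t)) (nhds (f t)))
    (hf_left : ∀ t ∈ Set.Ioc (0:ℝ) 1, Filter.Tendsto f (nhdsWithin t (Set.Iio t)) (nhds (fl t)))
    (hfl0 : fl 0 = 0)
    (hf_nonneg : ∀ t ∈ Set.Icc (0:ℝ) 1, 0 ≤ f t)
    (hf_jump : ∀ t ∈ Set.Icc (0:ℝ) 1, fl t ≤ f t)
    (hf0 : f 0 = 0) (hf1 : f 1 = 0)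
    (T u v : ℝ) (hT : T ∈ Set.Icc (0:ℝ) 1) (hu : u ∈ Set.Icc (0:ℝ) 1)
    (hTu : Prec f fl T u) (hTu' : T ≠ u)
    (hv : v ∈ Set.Ioc u 1) (hinf : infIcc f u v < fl T) :
    ∀ s ∈ Set.Icc (0:ℝ) 1, (s < T ∨ v < s) →
      min (xpos f fl T u) (jump f fl T - xpos f fl T u) ≤ looptreeDist f fl s u := by
  intro s hs hcase
  set A := {r : ℝ | r ∈ Set.Icc (0:ℝ) 1 ∧ Prec f fl r s ∧ Prec f fl r u} with hA
  have h0s : Prec f fl 0 s :=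
    ⟨hs.1, by rw [hfl0]; exact LoopAux.infIcc_nonneg hf_nonneg le_rfl hs.2 hs.1⟩
  have h0u : Prec f fl 0 u :=
    ⟨hu.1, by rw [hfl0]; exact LoopAux.infIcc_nonneg hf_nonneg le_rfl hu.2 hu.1⟩
  have hA0 : (0:ℝ) ∈ A := ⟨⟨le_rfl, zero_le_one⟩, h0s, h0u⟩
  have hA1 : A ⊆ Set.Icc 0 1 := fun r hr => hr.1
  set m := sSup A with hm
  have hmeq : mca f fl s u = m := rfl
  have hPs : Prec f fl m s :=
    LoopAux.prec_sSup hf_left hf_nonneg hA0 hA1 hs.2 fun r hr => hr.2.1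
  have hPu : Prec f fl m u :=
    LoopAux.prec_sSup hf_left hf_nonneg hA0 hA1 hu.2 fun r hr => hr.2.2
  have hbdd : BddAbove A := ⟨1, fun r hr => (hA1 hr).2⟩
  have hm0 : (0:ℝ) ≤ m := le_csSup hbdd hA0
  -- m < T
  have hmT : m < T := by
    rcases hcase with hsT | hvs
    · exact lt_of_le_of_lt hPs.1 hsT
    · by_contra h
      push_neg at h
      have h1 : fl m < fl T :=
        lt_of_le_of_lt (hPs.2.trans (LoopAux.infIcc_mono hf_nonneg hm0 hs.2
          (Set.Icc_subset_Icc hPu.1 hvs.le) hv.1.le)) hinf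
      have h2 : fl T ≤ fl m := by
        rcases eq_or_lt_of_le h with heq | hlt
        · exact le_of_eq (by rw [heq])
        · exact hTu.2.trans (LoopAux.infIcc_le_fl hf_left hf_nonneg hT.1 hlt hPu.1 hu.2)
      linarith
  have hPmT : Prec f fl m T :=
    ⟨hmT.le, hPu.2.trans (LoopAux.infIcc_mono hf_nonneg hm0 hu.2
      (Set.Icc_subset_Icc le_rfl hTu.1) hmT.le)⟩
  -- the term at T in dZero m u
  have hsummable := LoopAux.summable_dZero (f := f) (fl := fl) hf_left hf_nonneg hm0 hu.2 hu.1
  have hterm : cycleDist (jump f fl T) 0 (xpos f fl T u) ≤ dZero f fl m u := by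
    have := Summable.le_tsum hsummable (⟨T, hPmT, ne_of_lt hmT, hTu⟩ :
      {r : ℝ // Prec f fl m r ∧ m ≠ r ∧ Prec f fl r u})
      (fun j _ => (LoopAux.cycleDist_bounds hf_nonneg
        (hm0.trans j.2.1.1) hu.2 j.2.2.2).1)
    exact this
  have hxu : 0 ≤ xpos f fl T u := sub_nonneg.2 hTu.2
  have hmin : min (xpos f fl T u) (jump f fl T - xpos f fl T u)
      = cycleDist (jump f fl T) 0 (xpos f fl T u) := by
    unfold cycleDist
    rw [zero_sub, abs_neg, abs_of_nonneg hxu]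
  -- nonnegativity of the two other pieces
  have hxs0 : 0 ≤ xpos f fl m s := sub_nonneg.2 hPs.2
  have hxu0 : 0 ≤ xpos f fl m u := sub_nonneg.2 hPu.2
  have hxsD : xpos f fl m s ≤ jump f fl m := by
    have := LoopAux.infIcc_le_apply hf_nonneg hm0 hs.2 (⟨le_rfl, hPs.1⟩ : m ∈ Set.Icc m s)
    unfold xpos jump; linarith
  have hxuD : xpos f fl m u ≤ jump f fl m := by
    have := LoopAux.infIcc_le_apply hf_nonneg hm0 hu.2 (⟨le_rfl, hPu.1⟩ : m ∈ Set.Icc m u)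
    unfold xpos jump; linarith
  have hC : 0 ≤ cycleDist (jump f fl m) (xpos f fl m s) (xpos f fl m u) := by
    have habs : |xpos f fl m s - xpos f fl m u| ≤ jump f fl m :=
      abs_sub_le_iff.2 ⟨by linarith, by linarith⟩
    exact le_min (abs_nonneg _) (by unfold cycleDist at *; linarith)
  have hDs : 0 ≤ dZero f fl m s :=
    tsum_nonneg fun j => (LoopAux.cycleDist_bounds hf_nonneg
      (hm0.trans j.2.1.1) hs.2 j.2.2.2).1
  have hfin : looptreeDist f fl s u
      = cycleDist (jump f fl m) (xpos f fl m s) (xpos f fl m u)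
        + dZero f fl m s + dZero f fl m u := by
    rw [looptreeDist, hmeq]
  rw [hmin, hfin]
  linarith
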